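/- Let k ∈ L²(ℝ³×ℝ³; ℂ). Then the series p := Σ_{n≥1} (1/(2n)!) (k∘k̄)ⁿ and r := Σ_{n≥1} (1/(2n+1)!) (k∘k̄)ⁿ∘k converge absolutely in L²(ℝ³×ℝ³), and their sums satisfy ‖p‖₂ ≤ cosh(‖k‖₂) − 1 and ‖r‖₂ ≤ sinh(‖k‖₂) − ‖k‖₂. -/

import Mathlib

open MeasureTheory Real
open scoped ENNReal

noncomputable section

abbrev E3 : Type := EuclideanSpace ℝ (Fin 3)

/-- Composition of integral kernels: `(k₁∘k₂)(x,y) = ∫ k₁(x,z) k₂(z,y) dz`. -/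
def kComp (k₁ k₂ : E3 × E3 → ℂ) : E3 × E3 → ℂ :=
  fun p => ∫ z : E3, k₁ (p.1, z) * k₂ (z, p.2)

/-- Pointwise complex conjugate of a kernel. -/
def kConj (k : E3 × E3 → ℂ) : E3 × E3 → ℂ := fun p => starRingEnd ℂ (k p)

/-- `kChain k n = (k∘k̄)ⁿ∘k`. -/
def kChain (k : E3 × E3 → ℂ) : ℕ → E3 × E3 → ℂ
  | 0 => k
  | n + 1 => kComp k (kComp (kConj k) (kChain k n))

/-- `kPow k n = (k∘k̄)^{n+1}`. -/
def kPow (k : E3 × E3 → ℂ) : ℕ → E3 × E3 → ℂ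
  | 0 => kComp k (kConj k)
  | n + 1 => kComp (kComp k (kConj k)) (kPow k n)

/-- The `L²(ℝ³×ℝ³)` norm of a kernel. -/
def l2n (h : E3 × E3 → ℂ) : ℝ := Real.sqrt (∫ p : E3 × E3, ‖h p‖ ^ 2)

def J (h : E3 × E3 → ℂ) : ℝ≥0∞ := ∫⁻ p : E3 × E3, (‖h p‖₊ : ℝ≥0∞) ^ (2 : ℝ)

lemma J_congr {f g : E3 × E3 → ℂ} (h : f =ᵐ[volume] g) : J f = J g :=
  lintegral_congr_ae (h.mono fun p hp => by simp [hp])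

lemma l2n_congr {f g : E3 × E3 → ℂ} (h : f =ᵐ[volume] g) : l2n f = l2n g := by
  unfold l2n
  congr 1
  exact integral_congr_ae (h.mono fun p hp => by simp [hp])

lemma l2n_eq {f : E3 × E3 → ℂ} (hf : AEStronglyMeasurable f volume) :
    l2n f = Real.sqrt (J f).toReal := by
  unfold l2n J
  congr 1
  rw [integral_eq_lintegral_of_nonneg_ae (ae_of_all _ fun p => sq_nonneg _)
    ((hf.norm.aemeasurable.pow_const 2).aestronglyMeasurable)]
  congr 1
  apply lintegral_congr fun p => ?_
  rw [← enorm_eq_nnnorm, ← ofReal_norm, ENNReal.ofReal_rpow_of_nonneg (norm_nonneg _) (by norm_num : (0:ℝ) ≤ 2)]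
  congr 1
  rw [← Real.rpow_natCast ‖f p‖ 2]
  norm_num

lemma eLpNorm_eq_J {f : E3 × E3 → ℂ} : eLpNorm f 2 volume = (J f) ^ (1/2 : ℝ) := by
  rw [eLpNorm_eq_lintegral_rpow_enorm_toReal two_ne_zero ENNReal.ofNat_ne_top]
  simp [J]
  rfl

lemma J_lt_top {f : E3 × E3 → ℂ} (hf : MemLp f 2 volume) : J f < ∞ := by
  have h := hf.2
  rw [eLpNorm_eq_J] at h
  by_contra hc
  rw [not_lt, top_le_iff] at hc
  rw [hc] at h
  simp [ENNReal.top_rpow_of_pos (by norm_num : (0:ℝ) < 1/2)] at h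

lemma memℒp_of_J {f : E3 × E3 → ℂ} (hm : AEStronglyMeasurable f volume) (hJ : J f < ∞) :
    MemLp f 2 volume :=
  ⟨hm, by rw [eLpNorm_eq_J]; exact ENNReal.rpow_lt_top_of_nonneg (by norm_num) hJ.ne⟩

lemma sm_kComp {k₁ k₂ : E3 × E3 → ℂ} (h₁ : Measurable k₁) (h₂ : Measurable k₂) :
    Measurable (kComp k₁ k₂) := by
  have hf : StronglyMeasurable (fun q : (E3 × E3) × E3 => k₁ (q.1.1, q.2) * k₂ (q.2, q.1.2)) :=
    ((h₁.comp (measurable_fst.fst.prodMk measurable_snd)).mul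
      (h₂.comp (measurable_snd.prodMk measurable_fst.snd))).stronglyMeasurable
  exact hf.integral_prod_right'.measurable

lemma J_kComp_le {k₁ k₂ : E3 × E3 → ℂ} (h₁ : Measurable k₁) (h₂ : Measurable k₂) :
    J (kComp k₁ k₂) ≤ J k₁ * J k₂ := by
  classical
  set F : E3 → ℝ≥0∞ := fun x => ∫⁻ z : E3, (‖k₁ (x, z)‖₊ : ℝ≥0∞) ^ (2:ℝ) with hF
  set G : E3 → ℝ≥0∞ := fun y => ∫⁻ z : E3, (‖k₂ (z, y)‖₊ : ℝ≥0∞) ^ (2:ℝ) with hG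
  have hFm : Measurable F :=
    Measurable.lintegral_prod_right ((h₁.nnnorm.coe_nnreal_ennreal).pow_const (2:ℝ))
  have hGm : Measurable G := by
    apply Measurable.lintegral_prod_right
    exact (((h₂.comp measurable_swap).nnnorm.coe_nnreal_ennreal).pow_const (2:ℝ))
  have key : ∀ p : E3 × E3, (‖kComp k₁ k₂ p‖₊ : ℝ≥0∞) ^ (2:ℝ) ≤ F p.1 * G p.2 := by
    rintro ⟨x, y⟩
    have h1 : (‖kComp k₁ k₂ (x, y)‖₊ : ℝ≥0∞) ≤
        ∫⁻ z : E3, (‖k₁ (x, z)‖₊ : ℝ≥0∞) * (‖k₂ (z, y)‖₊ : ℝ≥0∞) := by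
      refine le_trans (enorm_integral_le_lintegral_enorm _) (le_of_eq ?_)
      apply lintegral_congr fun z => ?_
      show (‖k₁ (x, z) * k₂ (z, y)‖₊ : ℝ≥0∞) = _
      rw [nnnorm_mul, ENNReal.coe_mul]
    have h2 : (∫⁻ z : E3, (‖k₁ (x, z)‖₊ : ℝ≥0∞) * (‖k₂ (z, y)‖₊ : ℝ≥0∞)) ≤
        F x ^ (1/2 : ℝ) * G y ^ (1/2 : ℝ) := by
      have hconj : (2:ℝ).HolderConjugate 2 := ⟨by norm_num, by norm_num, by norm_num⟩
      exact ENNReal.lintegral_mul_le_Lp_mul_Lq volume hconj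
        ((h₁.comp (measurable_prodMk_left (x := x))).nnnorm.coe_nnreal_ennreal.aemeasurable)
        ((h₂.comp (measurable_prodMk_right (y := y))).nnnorm.coe_nnreal_ennreal.aemeasurable)
    calc (‖kComp k₁ k₂ (x, y)‖₊ : ℝ≥0∞) ^ (2:ℝ)
        ≤ (F x ^ (1/2 : ℝ) * G y ^ (1/2 : ℝ)) ^ (2:ℝ) :=
          ENNReal.rpow_le_rpow (h1.trans h2) (by norm_num)
      _ = F x * G y := by
          rw [ENNReal.mul_rpow_of_nonneg _ _ (by norm_num : (0:ℝ) ≤ 2),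
            ← ENNReal.rpow_mul, ← ENNReal.rpow_mul]
          norm_num
  calc J (kComp k₁ k₂) ≤ ∫⁻ p : E3 × E3, F p.1 * G p.2 := lintegral_mono key
    _ = (∫⁻ x : E3, F x) * (∫⁻ y : E3, G y) := by
        rw [Measure.volume_eq_prod, lintegral_prod_mul hFm.aemeasurable hGm.aemeasurable]
    _ = J k₁ * J k₂ := by
        unfold J
        rw [Measure.volume_eq_prod, lintegral_prod _ ((h₁.nnnorm.coe_nnreal_ennreal.pow_const (2:ℝ)).aemeasurable),
          lintegral_prod _ (((h₂.nnnorm.coe_nnreal_ennreal).pow_const (2:ℝ)).aemeasurable)]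
        congr 1
        rw [hG, lintegral_lintegral_swap (((h₂.comp measurable_swap).nnnorm.coe_nnreal_ennreal.pow_const
          (2:ℝ)).aemeasurable)]

lemma ae_comp_fst {P : E3 → Prop} (h : ∀ᵐ x ∂(volume : Measure E3), P x) :
    ∀ᵐ p ∂(volume : Measure (E3 × E3)), P p.1 :=
  Measure.quasiMeasurePreserving_fst.ae h

lemma ae_comp_snd {P : E3 → Prop} (h : ∀ᵐ y ∂(volume : Measure E3), P y) :
    ∀ᵐ p ∂(volume : Measure (E3 × E3)), P p.2 :=
  Measure.quasiMeasurePreserving_snd.ae h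

lemma kComp_congr {k₁ k₁' k₂ k₂' : E3 × E3 → ℂ} (h₁ : k₁ =ᵐ[volume] k₁')
    (h₂ : k₂ =ᵐ[volume] k₂') : kComp k₁ k₂ =ᵐ[volume] kComp k₁' k₂' := by
  have step1 : kComp k₁ k₂ =ᵐ[volume] kComp k₁' k₂ := by
    have H1 : ∀ᵐ x ∂(volume : Measure E3), ∀ᵐ z ∂(volume : Measure E3), k₁ (x, z) = k₁' (x, z) :=
      Measure.ae_ae_of_ae_prod h₁
    have H1' : ∀ᵐ x ∂(volume : Measure E3), ∀ y : E3,
        (∫ z : E3, k₁ (x, z) * k₂ (z, y)) = ∫ z : E3, k₁' (x, z) * k₂ (z, y) :=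
      H1.mono fun x hx y => integral_congr_ae (hx.mono fun z hz => by simp only []; rw [hz])
    exact (ae_comp_fst H1').mono fun p hp => hp p.2
  have step2 : kComp k₁' k₂ =ᵐ[volume] kComp k₁' k₂' := by
    have hsw : ∀ᵐ q ∂((volume : Measure E3).prod volume),
        k₂ (Prod.swap q) = k₂' (Prod.swap q) :=
      Measure.measurePreserving_swap.quasiMeasurePreserving.ae h₂
    have H2 : ∀ᵐ y ∂(volume : Measure E3), ∀ᵐ z ∂(volume : Measure E3), k₂ (z, y) = k₂' (z, y) :=
      Measure.ae_ae_of_ae_prod hsw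
    have H2' : ∀ᵐ y ∂(volume : Measure E3), ∀ x : E3,
        (∫ z : E3, k₁' (x, z) * k₂ (z, y)) = ∫ z : E3, k₁' (x, z) * k₂' (z, y) :=
      H2.mono fun y hy x => integral_congr_ae (hy.mono fun z hz => by simp only []; rw [hz])
    exact (ae_comp_snd H2').mono fun p hp => hp p.1
  exact step1.trans step2

lemma kConj_congr {k k' : E3 × E3 → ℂ} (h : k =ᵐ[volume] k') : kConj k =ᵐ[volume] kConj k' :=
  h.mono fun p hp => by simp [kConj, hp]

lemma m_kConj {k : E3 × E3 → ℂ} (h : Measurable k) : Measurable (kConj k) :=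
  (RCLike.continuous_conj.measurable).comp h

lemma J_kConj (k : E3 × E3 → ℂ) : J (kConj k) = J k := by
  unfold J kConj
  apply lintegral_congr fun p => ?_
  simp

lemma half_pow {x y : ℝ≥0∞} (h : x ^ (1/2 : ℝ) ≤ y) : x ≤ y ^ (2 : ℝ) := by
  have h2 := ENNReal.rpow_le_rpow h (by norm_num : (0:ℝ) ≤ 2)
  rwa [← ENNReal.rpow_mul, show (1/2 : ℝ) * 2 = 1 by norm_num, ENNReal.rpow_one] at h2

lemma iSup_rpow_two {s : ℕ → ℝ≥0∞} (hs : Monotone s) :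
    (⨆ m, s m) ^ (2 : ℝ) = ⨆ m, s m ^ (2 : ℝ) := by
  have h2 : ∀ x : ℝ≥0∞, x ^ (2:ℝ) = x * x := fun x => by
    rw [show (2:ℝ) = ((2:ℕ):ℝ) by norm_num, ENNReal.rpow_natCast, pow_two]
  simp only [h2]
  apply le_antisymm
  · rw [ENNReal.iSup_mul]
    refine iSup_le fun m => ?_
    rw [ENNReal.mul_iSup]
    refine iSup_le fun l => ?_
    exact le_iSup_of_le (max m l) (mul_le_mul' (hs (le_max_left m l)) (hs (le_max_right m l)))
  · exact iSup_le fun m => mul_le_mul' (le_iSup s m) (le_iSup s m)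

lemma tsum_bound {g : ℕ → E3 × E3 → ℂ} {B : ℕ → ℝ≥0∞}
    (hgm : ∀ n, Measurable (g n))
    (hgB : ∀ n, (J (g n)) ^ (1/2 : ℝ) ≤ B n) (hB : ∑' n, B n ≠ ∞) :
    AEStronglyMeasurable (fun p => ∑' n, g n p) (volume : Measure (E3 × E3)) ∧
      J (fun p => ∑' n, g n p) ≤ (∑' n, B n) ^ (2 : ℝ) := by
  classical
  set a : ℕ → E3 × E3 → ℝ≥0∞ := fun n p => (‖g n p‖₊ : ℝ≥0∞) with ha
  have ham : ∀ n, Measurable (a n) := fun n => (hgm n).nnnorm.coe_nnreal_ennreal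
  set A : E3 × E3 → ℝ≥0∞ := fun p => ∑' n, a n p with hA
  have hAm : Measurable A := Measurable.ennreal_tsum ham
  set S : ℕ → E3 × E3 → ℝ≥0∞ := fun m p => ∑ n ∈ Finset.range m, a n p with hS
  have hSm : ∀ m, Measurable (S m) := fun m => Finset.measurable_sum _ (fun n _ => ham n)
  have hSmono : Monotone S := fun m m' h p =>
    Finset.sum_le_sum_of_subset (Finset.range_subset_range.2 h)
  have hSch : ∀ m, (∫⁻ p : E3 × E3, S m p ^ (2:ℝ)) ^ (1/2:ℝ) ≤ ∑ n ∈ Finset.range m, B n := by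
    intro m
    induction m with
    | zero =>
        simp [hS, ENNReal.zero_rpow_of_pos]
    | succ m ih =>
        have hrw : (fun p : E3 × E3 => S (m+1) p ^ (2:ℝ)) =
            fun p => ((S m + a m) p) ^ (2:ℝ) := by
          funext p
          simp only [hS, Finset.sum_range_succ, Pi.add_apply]
        calc (∫⁻ p : E3 × E3, S (m+1) p ^ (2:ℝ)) ^ (1/2:ℝ)
            = (∫⁻ p : E3 × E3, ((S m + a m) p) ^ (2:ℝ)) ^ (1/2:ℝ) := by rw [hrw]
          _ ≤ (∫⁻ p : E3 × E3, S m p ^ (2:ℝ)) ^ (1/2:ℝ)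
              + (∫⁻ p : E3 × E3, a m p ^ (2:ℝ)) ^ (1/2:ℝ) :=
              ENNReal.lintegral_Lp_add_le (hSm m).aemeasurable (ham m).aemeasurable one_le_two
          _ ≤ (∑ n ∈ Finset.range m, B n) + B m := add_le_add ih (hgB m)
          _ = ∑ n ∈ Finset.range (m+1), B n := (Finset.sum_range_succ _ _).symm
  have hint : (∫⁻ p : E3 × E3, A p ^ (2:ℝ)) ≤ (∑' n, B n) ^ (2:ℝ) := by
    have hpt : (fun p : E3 × E3 => A p ^ (2:ℝ)) = fun p => ⨆ m, S m p ^ (2:ℝ) := by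
      funext p
      rw [hA]
      simp only
      rw [ENNReal.tsum_eq_iSup_nat, iSup_rpow_two (fun m m' h => hSmono h p)]
    rw [hpt, lintegral_iSup (fun m => (hSm m).pow_const (2:ℝ))
      (fun m m' h p => ENNReal.rpow_le_rpow (hSmono h p) (by norm_num))]
    exact iSup_le fun m => (half_pow (hSch m)).trans
      (ENNReal.rpow_le_rpow (ENNReal.sum_le_tsum _) (by norm_num))
  have hfin : ∀ᵐ p : E3 × E3, A p < ∞ := by
    have h2 : ∀ᵐ p : E3 × E3, A p ^ (2:ℝ) < ∞ :=
      ae_lt_top (hAm.pow_const (2:ℝ))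
        (hint.trans_lt (ENNReal.rpow_lt_top_of_nonneg (by norm_num) hB)).ne
    exact h2.mono fun p hp => (ENNReal.rpow_lt_top_iff_of_pos (by norm_num : (0:ℝ) < 2)).mp hp
  have hsummable : ∀ᵐ p : E3 × E3, Summable fun n => ‖g n p‖ := by
    refine hfin.mono fun p hp => ?_
    have h1 : Summable fun n => ‖g n p‖₊ := ENNReal.tsum_coe_ne_top_iff_summable.mp hp.ne
    simpa using NNReal.summable_coe.mpr h1
  constructor
  · refine aestronglyMeasurable_of_tendsto_ae Filter.atTop
      (fun m => (Finset.measurable_sum (Finset.range m) fun n _ => hgm n).aestronglyMeasurable)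
      (hsummable.mono fun p hp => ?_)
    exact (hp.of_norm).hasSum.tendsto_sum_nat
  · refine le_trans (lintegral_mono_ae ?_) hint
    refine hsummable.mono fun p hp => ?_
    refine ENNReal.rpow_le_rpow ?_ (by norm_num)
    calc (‖∑' n, g n p‖₊ : ℝ≥0∞) = ENNReal.ofReal ‖∑' n, g n p‖ :=
          (ofReal_norm _).symm
      _ ≤ ENNReal.ofReal (∑' n, ‖g n p‖) :=
          ENNReal.ofReal_le_ofReal (norm_tsum_le_tsum_norm hp)
      _ = ∑' n, ENNReal.ofReal ‖g n p‖ :=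
          ENNReal.ofReal_tsum_of_nonneg (fun n => norm_nonneg _) hp
      _ = A p := tsum_congr fun n => ofReal_norm _

lemma l2n_nonneg (f : E3 × E3 → ℂ) : 0 ≤ l2n f := Real.sqrt_nonneg _

lemma J_const_mul {c : ℂ} {f : E3 × E3 → ℂ} (hf : Measurable f) :
    J (fun p => c * f p) = ((‖c‖₊ : ℝ≥0∞)) ^ (2:ℝ) * J f := by
  unfold J
  rw [← lintegral_const_mul _ ((hf.nnnorm.coe_nnreal_ennreal).pow_const (2:ℝ))]
  apply lintegral_congr fun p => ?_
  rw [nnnorm_mul, ENNReal.coe_mul, ENNReal.mul_rpow_of_nonneg _ _ (by norm_num : (0:ℝ) ≤ 2)]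

lemma rpow_half_pow {x : ℝ} (hx : 0 ≤ x) (m : ℕ) :
    (ENNReal.ofReal (x ^ 2) ^ m) ^ (1/2 : ℝ) = ENNReal.ofReal (x ^ m) := by
  rw [← ENNReal.ofReal_pow (sq_nonneg x) m,
    ENNReal.ofReal_rpow_of_nonneg (pow_nonneg (sq_nonneg x) m) (by norm_num : (0:ℝ) ≤ 1/2)]
  congr 1
  rw [show (x^2)^m = (x^m)^2 by ring, ← Real.rpow_natCast (x^m) 2,
    ← Real.rpow_mul (pow_nonneg hx m)]
  norm_num

/-- For `k ∈ L²(ℝ³×ℝ³)`, the series `p = Σ_{n≥1} (1/(2n)!)(k∘k̄)ⁿ` and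
`r = Σ_{n≥1} (1/(2n+1)!)(k∘k̄)ⁿ∘k` converge absolutely in `L²(ℝ³×ℝ³)`, and their sums
satisfy `‖p‖₂ ≤ cosh(‖k‖₂) − 1` and `‖r‖₂ ≤ sinh(‖k‖₂) − ‖k‖₂`. -/
theorem stmt9 (k : E3 × E3 → ℂ) (hk : MemLp k 2 (volume : Measure (E3 × E3))) :
    (∀ n : ℕ, MemLp (kPow k n) 2 (volume : Measure (E3 × E3))) ∧
    (∀ n : ℕ, MemLp (kChain k (n + 1)) 2 (volume : Measure (E3 × E3))) ∧
    Summable (fun n : ℕ => ((Nat.factorial (2 * (n + 1)) : ℝ))⁻¹ * l2n (kPow k n)) ∧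
    Summable (fun n : ℕ =>
      ((Nat.factorial (2 * (n + 1) + 1) : ℝ))⁻¹ * l2n (kChain k (n + 1))) ∧
    l2n (fun p => ∑' n : ℕ, ((Nat.factorial (2 * (n + 1)) : ℂ))⁻¹ * kPow k n p) ≤
      Real.cosh (l2n k) - 1 ∧
    l2n (fun p => ∑' n : ℕ, ((Nat.factorial (2 * (n + 1) + 1) : ℂ))⁻¹ * kChain k (n + 1) p) ≤
      Real.sinh (l2n k) - l2n k := by
  classical
  have hm := hk.1
  set k' : E3 × E3 → ℂ := hm.mk k with hk'def
  have hk'm : Measurable k' := hm.stronglyMeasurable_mk.measurable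
  have hkk' : k =ᵐ[volume] k' := hm.ae_eq_mk
  have hk' : MemLp k' 2 volume := hk.ae_eq hkk'
  have hconj : kConj k =ᵐ[volume] kConj k' := kConj_congr hkk'
  have hchainc : ∀ n, kChain k n =ᵐ[volume] kChain k' n := by
    intro n
    induction n with
    | zero => exact hkk'
    | succ n ih => exact kComp_congr hkk' (kComp_congr hconj ih)
  have hpowc : ∀ n, kPow k n =ᵐ[volume] kPow k' n := by
    intro n
    induction n with
    | zero => exact kComp_congr hkk' hconj
    | succ n ih => exact kComp_congr (kComp_congr hkk' hconj) ih
  have mchain : ∀ n, Measurable (kChain k' n) := by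
    intro n
    induction n with
    | zero => exact hk'm
    | succ n ih => exact sm_kComp hk'm (sm_kComp (m_kConj hk'm) ih)
  have mpow : ∀ n, Measurable (kPow k' n) := by
    intro n
    induction n with
    | zero => exact sm_kComp hk'm (m_kConj hk'm)
    | succ n ih => exact sm_kComp (sm_kComp hk'm (m_kConj hk'm)) ih
  have hJk : J k' < ∞ := J_lt_top hk'
  have jchain : ∀ n, J (kChain k' n) ≤ (J k') ^ (2*n+1) := by
    intro n
    induction n with
    | zero =>
        rw [show 2*0+1 = 1 by norm_num, pow_one]
        exact le_rfl
    | succ n ih =>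
        calc J (kChain k' (n+1))
            ≤ J k' * J (kComp (kConj k') (kChain k' n)) :=
              J_kComp_le hk'm (sm_kComp (m_kConj hk'm) (mchain n))
          _ ≤ J k' * (J (kConj k') * J (kChain k' n)) :=
              mul_le_mul' le_rfl (J_kComp_le (m_kConj hk'm) (mchain n))
          _ ≤ J k' * (J k' * (J k') ^ (2*n+1)) := by
              rw [J_kConj]
              exact mul_le_mul' le_rfl (mul_le_mul' le_rfl ih)
          _ = (J k') ^ (2*(n+1)+1) := by ring
  have jpow : ∀ n, J (kPow k' n) ≤ (J k') ^ (2*n+2) := by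
    intro n
    induction n with
    | zero =>
        calc J (kPow k' 0) ≤ J k' * J (kConj k') := J_kComp_le hk'm (m_kConj hk'm)
          _ = (J k') ^ (2*0+2) := by rw [J_kConj]; ring
    | succ n ih =>
        calc J (kPow k' (n+1))
            ≤ J (kComp k' (kConj k')) * J (kPow k' n) :=
              J_kComp_le (sm_kComp hk'm (m_kConj hk'm)) (mpow n)
          _ ≤ (J k' * J (kConj k')) * (J k') ^ (2*n+2) :=
              mul_le_mul' (J_kComp_le hk'm (m_kConj hk'm)) ih
          _ = (J k') ^ (2*(n+1)+2) := by rw [J_kConj]; ring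
  set M : ℝ := l2n k with hMdef
  have hM0 : 0 ≤ M := Real.sqrt_nonneg _
  have hl2k' : M = Real.sqrt (J k').toReal := by
    rw [hMdef, l2n_congr hkk', l2n_eq hk'.1]
  have hJM : (J k').toReal = M ^ 2 := by
    rw [hl2k', Real.sq_sqrt ENNReal.toReal_nonneg]
  have hJofReal : J k' = ENNReal.ofReal (M ^ 2) := by
    rw [← hJM, ENNReal.ofReal_toReal hJk.ne]
  -- MemLp conclusions
  have mem_pow : ∀ n : ℕ, MemLp (kPow k n) 2 (volume : Measure (E3 × E3)) := fun n =>
    (memℒp_of_J (mpow n).aestronglyMeasurable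
      ((jpow n).trans_lt (ENNReal.pow_lt_top hJk))).ae_eq (hpowc n).symm
  have mem_chain : ∀ n : ℕ, MemLp (kChain k (n+1)) 2 (volume : Measure (E3 × E3)) := fun n =>
    (memℒp_of_J (mchain (n+1)).aestronglyMeasurable
      ((jchain (n+1)).trans_lt (ENNReal.pow_lt_top hJk))).ae_eq (hchainc (n+1)).symm
  -- real norm bounds
  have l2n_le_of_J : ∀ (f : E3 × E3 → ℂ) (m : ℕ), Measurable f → J f ≤ (J k') ^ m →
      l2n f ≤ M ^ m := by
    intro f m hfm hJf
    rw [l2n_eq hfm.aestronglyMeasurable]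
    have h1 : (J f).toReal ≤ ((J k') ^ m).toReal :=
      ENNReal.toReal_mono (ENNReal.pow_lt_top hJk).ne hJf
    refine (Real.sqrt_le_sqrt h1).trans (le_of_eq ?_)
    rw [ENNReal.toReal_pow, hJM, show (M^2)^m = (M^m)^2 by ring,
      Real.sqrt_sq (pow_nonneg hM0 _)]
  have l2n_pow_le : ∀ n, l2n (kPow k n) ≤ M ^ (2*n+2) := fun n => by
    rw [l2n_congr (hpowc n)]
    exact l2n_le_of_J _ _ (mpow n) (jpow n)
  have l2n_chain_le : ∀ n, l2n (kChain k (n+1)) ≤ M ^ (2*n+3) := fun n => by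
    rw [l2n_congr (hchainc (n+1))]
    exact (l2n_le_of_J _ _ (mchain (n+1)) (jchain (n+1))).trans (le_of_eq (by ring_nf))
  -- series
  have hcoshSum : HasSum (fun n : ℕ => M ^ (2*(n+1)) / ((2*(n+1)).factorial : ℝ))
      (Real.cosh M - 1) := by
    have h0 := Real.hasSum_cosh M
    have h1 := (hasSum_nat_add_iff' (f := fun n : ℕ => M ^ (2*n) / ((2*n).factorial : ℝ)) 1).mpr h0
    simpa using h1
  have hsinhSum : HasSum (fun n : ℕ => M ^ (2*(n+1)+1) / ((2*(n+1)+1).factorial : ℝ))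
      (Real.sinh M - M) := by
    have h0 := Real.hasSum_sinh M
    have h1 := (hasSum_nat_add_iff'
      (f := fun n : ℕ => M ^ (2*n+1) / ((2*n+1).factorial : ℝ)) 1).mpr h0
    simpa using h1
  have sum1 : Summable (fun n : ℕ => ((Nat.factorial (2 * (n + 1)) : ℝ))⁻¹ * l2n (kPow k n)) := by
    refine Summable.of_nonneg_of_le
      (fun n => mul_nonneg (inv_nonneg.2 (Nat.cast_nonneg _)) (l2n_nonneg _))
      (fun n => ?_) hcoshSum.summable
    calc ((Nat.factorial (2 * (n + 1)) : ℝ))⁻¹ * l2n (kPow k n)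
        ≤ ((Nat.factorial (2 * (n + 1)) : ℝ))⁻¹ * M ^ (2*n+2) :=
          mul_le_mul_of_nonneg_left (l2n_pow_le n) (inv_nonneg.2 (Nat.cast_nonneg _))
      _ = M ^ (2*(n+1)) / ((2*(n+1)).factorial : ℝ) := by
          rw [inv_mul_eq_div, show 2*(n+1) = 2*n+2 by ring]
  have sum2 : Summable (fun n : ℕ =>
      ((Nat.factorial (2 * (n + 1) + 1) : ℝ))⁻¹ * l2n (kChain k (n + 1))) := by
    refine Summable.of_nonneg_of_le
      (fun n => mul_nonneg (inv_nonneg.2 (Nat.cast_nonneg _)) (l2n_nonneg _))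
      (fun n => ?_) hsinhSum.summable
    calc ((Nat.factorial (2 * (n + 1) + 1) : ℝ))⁻¹ * l2n (kChain k (n+1))
        ≤ ((Nat.factorial (2 * (n + 1) + 1) : ℝ))⁻¹ * M ^ (2*n+3) :=
          mul_le_mul_of_nonneg_left (l2n_chain_le n) (inv_nonneg.2 (Nat.cast_nonneg _))
      _ = M ^ (2*(n+1)+1) / ((2*(n+1)+1).factorial : ℝ) := by
          rw [inv_mul_eq_div, show 2*(n+1)+1 = 2*n+3 by ring]
  -- tsum norm bounds
  have key_bound : ∀ (f : ℕ → E3 × E3 → ℂ) (e : ℕ → ℕ) (C : ℝ),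
      (∀ n, Measurable (f n)) → (∀ n, J (f n) ≤ (J k') ^ (e n)) →
      HasSum (fun n => M ^ (e n) / ((e n).factorial : ℝ)) C →
      l2n (fun p => ∑' n : ℕ, ((Nat.factorial (e n) : ℂ))⁻¹ * f n p) ≤ C := by
    intro f e C hfm hJf hCsum
    have hC0 : 0 ≤ C := by
      rw [← hCsum.tsum_eq]
      exact tsum_nonneg fun n => div_nonneg (pow_nonneg hM0 _) (Nat.cast_nonneg _)
    set g : ℕ → E3 × E3 → ℂ := fun n p => ((Nat.factorial (e n) : ℂ))⁻¹ * f n p with hg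
    set B : ℕ → ℝ≥0∞ := fun n => ENNReal.ofReal (M ^ (e n) / ((e n).factorial : ℝ)) with hBdef
    have hgm : ∀ n, Measurable (g n) := fun n => (hfm n).const_mul _
    have hgB : ∀ n, (J (g n)) ^ (1/2 : ℝ) ≤ B n := by
      intro n
      rw [hg]
      simp only
      rw [J_const_mul (hfm n), ENNReal.mul_rpow_of_nonneg _ _ (by norm_num : (0:ℝ) ≤ 1/2),
        ← ENNReal.rpow_mul, show (2:ℝ) * (1/2) = 1 by norm_num, ENNReal.rpow_one]
      have hnc : ((‖((Nat.factorial (e n) : ℂ))⁻¹‖₊ : ℝ≥0∞))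
          = ENNReal.ofReal (((e n).factorial : ℝ))⁻¹ := by
        rw [← enorm_eq_nnnorm, ← ofReal_norm, norm_inv, RCLike.norm_natCast]
      have hJhalf : (J (f n)) ^ (1/2 : ℝ) ≤ ENNReal.ofReal (M ^ (e n)) := by
        have h1 : J (f n) ≤ ENNReal.ofReal (M^2) ^ (e n) := by rw [← hJofReal]; exact hJf n
        have h2 := ENNReal.rpow_le_rpow h1 (by norm_num : (0:ℝ) ≤ 1/2)
        rwa [rpow_half_pow hM0] at h2
      rw [hnc]
      calc ENNReal.ofReal (((e n).factorial : ℝ))⁻¹ * (J (f n)) ^ (1/2 : ℝ)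
          ≤ ENNReal.ofReal (((e n).factorial : ℝ))⁻¹ * ENNReal.ofReal (M ^ (e n)) :=
            mul_le_mul' le_rfl hJhalf
        _ = B n := by
            rw [hBdef]
            simp only
            rw [← ENNReal.ofReal_mul (inv_nonneg.2 (Nat.cast_nonneg _)), inv_mul_eq_div]
    have hBt : ∑' n, B n = ENNReal.ofReal C := by
      rw [hBdef, ← ENNReal.ofReal_tsum_of_nonneg
        (fun n => div_nonneg (pow_nonneg hM0 _) (Nat.cast_nonneg _)) hCsum.summable,
        hCsum.tsum_eq]
    obtain ⟨hsm, hJle⟩ := tsum_bound hgm hgB (by rw [hBt]; exact ENNReal.ofReal_ne_top)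
    rw [show (fun p : E3 × E3 => ∑' n : ℕ, ((Nat.factorial (e n) : ℂ))⁻¹ * f n p)
      = fun p => ∑' n, g n p from rfl]
    rw [l2n_eq hsm]
    rw [hBt] at hJle
    have h2 : (J (fun p => ∑' n, g n p)).toReal ≤ ((ENNReal.ofReal C) ^ (2:ℝ)).toReal := by
      refine ENNReal.toReal_mono ?_ hJle
      exact (ENNReal.rpow_lt_top_of_nonneg (by norm_num) ENNReal.ofReal_ne_top).ne
    refine (Real.sqrt_le_sqrt h2).trans (le_of_eq ?_)
    rw [ENNReal.ofReal_rpow_of_nonneg hC0 (by norm_num : (0:ℝ) ≤ 2),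
      ENNReal.toReal_ofReal (Real.rpow_nonneg hC0 _),
      show C ^ (2:ℝ) = C ^ (2:ℕ) by rw [← Real.rpow_natCast C 2]; norm_num,
      Real.sqrt_sq hC0]
  refine ⟨mem_pow, mem_chain, sum1, sum2, ?_, ?_⟩
  · have hae : (fun p : E3 × E3 => ∑' n : ℕ, ((Nat.factorial (2 * (n + 1)) : ℂ))⁻¹ * kPow k n p)
        =ᵐ[volume] fun p => ∑' n : ℕ, ((Nat.factorial (2 * (n + 1)) : ℂ))⁻¹ * kPow k' n p := by
      have hall : ∀ᵐ p : E3 × E3, ∀ n, kPow k n p = kPow k' n p := ae_all_iff.2 fun n => hpowc n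
      exact hall.mono fun p hp => tsum_congr fun n => by rw [hp n]
    rw [l2n_congr hae]
    exact key_bound (fun n => kPow k' n) (fun n => 2*(n+1)) _ mpow
      (fun n => by
        show J (kPow k' n) ≤ J k' ^ (2*(n+1))
        rw [show 2*(n+1) = 2*n+2 by ring]
        exact jpow n) hcoshSum
  · have hae : (fun p : E3 × E3 =>
        ∑' n : ℕ, ((Nat.factorial (2 * (n + 1) + 1) : ℂ))⁻¹ * kChain k (n+1) p)
        =ᵐ[volume] fun p => ∑' n : ℕ, ((Nat.factorial (2 * (n + 1) + 1) : ℂ))⁻¹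
          * kChain k' (n+1) p := by
      have hall : ∀ᵐ p : E3 × E3, ∀ n, kChain k (n+1) p = kChain k' (n+1) p :=
        ae_all_iff.2 fun n => hchainc (n+1)
      exact hall.mono fun p hp => tsum_congr fun n => by rw [hp n]
    rw [l2n_congr hae]
    exact key_bound (fun n => kChain k' (n+1)) (fun n => 2*(n+1)+1) _ (fun n => mchain (n+1))
      (fun n => by
        show J (kChain k' (n+1)) ≤ J k' ^ (2*(n+1)+1)
        rw [show 2*(n+1)+1 = 2*(n+1)+1 from rfl]
        exact jchain (n+1)) hsinhSum
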